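/- For any odd natural number n, -φⁿ cannot be a root of the domination polynomial of any graph, where φ = (1+√5)/2. -/

import Mathlib

open SimpleGraph Polynomial

noncomputable def phi : ℝ := (1 + Real.sqrt 5) / 2

/-- `S` is a dominating set of `G`: every vertex outside `S` has a neighbour in `S`. -/
def IsDominatingSet {V : Type*} (G : SimpleGraph V) (S : Finset V) : Prop :=
  ∀ v ∉ S, ∃ u ∈ S, G.Adj u v

/-- The domination polynomial `D(G,x) = Σₖ d(G,k) xᵏ`, where `d(G,k)` is the number of
dominating sets of `G` of cardinality `k`. -/
noncomputable def dominationPolynomial {V : Type*} [Fintype V] (G : SimpleGraph V) :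
    Polynomial ℝ :=
  ∑ k ∈ Finset.range (Fintype.card V + 1),
    Polynomial.C ((Nat.card {S : Finset V // IsDominatingSet G S ∧ S.card = k} : ℝ)) *
      Polynomial.X ^ k

/-- The algebraic conjugate of `phi`. -/
noncomputable def psi' : ℝ := (1 - Real.sqrt 5) / 2

lemma sqrt5_sq : Real.sqrt 5 ^ 2 = 5 := Real.sq_sqrt (by norm_num)

lemma phi_sq : phi ^ 2 = phi + 1 := by
  have := sqrt5_sq; unfold phi; ring_nf; nlinarith [this]

lemma psi'_sq : psi' ^ 2 = psi' + 1 := by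
  have := sqrt5_sq; unfold psi'; ring_nf; nlinarith [this]

lemma psi'_neg : psi' < 0 := by
  have h : (2:ℝ) < Real.sqrt 5 := by
    have := Real.sq_sqrt (by norm_num : (5:ℝ) ≥ 0)
    nlinarith [Real.sqrt_nonneg 5]
  unfold psi'; linarith

lemma irr_sqrt5 : Irrational (Real.sqrt 5) := by
  have : Nat.Prime 5 := by norm_num
  exact this.irrational_sqrt

lemma int_combo {a b : ℤ} (h : (a:ℝ) + b * phi = 0) : a = 0 ∧ b = 0 := by
  by_cases hb : b = 0
  · subst hb; simp at h; exact ⟨by exact_mod_cast h, rfl⟩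
  · exfalso
    apply irr_sqrt5
    refine ⟨(-(2*a+b) : ℚ)/(b:ℚ), ?_⟩
    have hbR : (b:ℝ) ≠ 0 := Int.cast_ne_zero.mpr hb
    unfold phi at h
    push_cast
    field_simp at h ⊢
    linarith

lemma domPoly_pos {V : Type*} [Fintype V] (G : SimpleGraph V) {t : ℝ} (ht : 0 < t) :
    0 < (dominationPolynomial G).eval t := by
  unfold dominationPolynomial
  rw [eval_finset_sum]
  simp only [eval_mul, eval_C, eval_pow, eval_X]
  apply Finset.sum_pos'
  · intro i _; positivity
  · refine ⟨Fintype.card V, Finset.self_mem_range_succ _, ?_⟩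
    have hne : Nonempty {S : Finset V // IsDominatingSet G S ∧ S.card = Fintype.card V} :=
      ⟨⟨Finset.univ, fun v hv => absurd (Finset.mem_univ v) hv, Finset.card_univ⟩⟩
    have := Nat.card_pos (α := {S : Finset V // IsDominatingSet G S ∧ S.card = Fintype.card V})
    positivity

theorem neg_goldenRatio_pow_odd_not_dominationRoot (n : ℕ) (hn : Odd n)
    {V : Type*} [Fintype V] (G : SimpleGraph V) :
    (dominationPolynomial G).eval (-(phi ^ n)) ≠ 0 := by
  intro h
  classical
  set N := Fintype.card V with hN
  set c : ℕ → ℕ := fun k => Nat.card {S : Finset V // IsDominatingSet G S ∧ S.card = k} with hc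
  set p' : Polynomial ℤ := ∑ k ∈ Finset.range (N+1), C (c k : ℤ) * X^k with hp'
  have hq : ∀ t : ℝ, (dominationPolynomial G).eval t = Polynomial.aeval t p' := by
    intro t
    simp [dominationPolynomial, hp', eval_finset_sum, map_sum, hc, hN]
  set p : Polynomial ℤ := p'.comp (-(X^n)) with hp
  have key : ∀ x : ℝ, Polynomial.aeval x p = Polynomial.aeval (-(x^n)) p' := by
    intro x
    simp [hp, aeval_comp]
  have h1 : Polynomial.aeval phi p = 0 := by rw [key, ← hq]; exact h
  set m : Polynomial ℤ := X^2 - X - 1 with hm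
  have hmm : m.Monic := by
    have : m = X^2 - (X + 1) := by ring
    rw [this]
    have hd : (X + 1 : Polynomial ℤ).degree < (2:ℕ) := by
      apply lt_of_le_of_lt (degree_X_add_C (1:ℤ)).le
      decide
    exact monic_X_pow_sub hd
  have hdegm : m.degree = 2 := by
    unfold m; compute_degree!
  have hmphi : Polynomial.aeval phi m = 0 := by
    have h2 : phi ^ 2 = phi + 1 := phi_sq
    simp [hm]; linarith
  set r : Polynomial ℤ := p %ₘ m with hr
  have hsplit : r + m * (p /ₘ m) = p := modByMonic_add_div p m
  have hrphi : Polynomial.aeval phi r = 0 := by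
    have := congrArg (Polynomial.aeval phi) hsplit
    simp [map_add, map_mul, hmphi] at this
    rw [this]; exact h1
  have hrdeg : r.degree ≤ 1 := by
    have := degree_modByMonic_lt p hmm
    rw [hdegm] at this
    exact Order.le_of_lt_succ (by exact_mod_cast this)
  have hrform : r = C (r.coeff 1) * X + C (r.coeff 0) := eq_X_add_C_of_degree_le_one hrdeg
  have hcomb : ((r.coeff 0 : ℤ) : ℝ) + (r.coeff 1 : ℤ) * phi = 0 := by
    rw [hrform] at hrphi
    simp at hrphi
    linarith
  have hab : r.coeff 0 = 0 ∧ r.coeff 1 = 0 := int_combo hcomb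
  have hr0 : r = 0 := by rw [hrform, hab.1, hab.2]; simp
  have hmpsi : Polynomial.aeval psi' m = 0 := by
    have h2 : psi' ^ 2 = psi' + 1 := psi'_sq
    simp [hm]; linarith
  have hppsi : Polynomial.aeval psi' p = 0 := by
    rw [← hsplit, hr0]
    simp [map_mul, hmpsi]
  have hpsin : 0 < -(psi' ^ n) := by
    have : psi' ^ n < 0 := Odd.pow_neg hn psi'_neg
    linarith
  have := hq (-(psi' ^ n))
  rw [← key] at this
  have hpos : 0 < (dominationPolynomial G).eval (-(psi' ^ n)) := domPoly_pos G hpsin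
  rw [this, hppsi] at hpos
  exact lt_irrefl 0 hpos
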